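/- Suppose the (d−1)-dimensional simplicial complex Γ has a Boolean decomposition Γ = {F ∪ G : F ∈ S, G ⊆ [d − 2|F|]} with S the subcomplex of faces disjoint from [d], and suppose the subcomplex Γ_e ≤ Γ has a Boolean decomposition Γ_e = {F_e ∪ G_e : F_e ∈ S_e, G_e ⊆ [d − 2|F_e| − 2]} with S_e ≤ S. Then Γ' = Γ ∪ (Γ_e * u), for a new vertex u, has a Boolean decomposition with initial part S' = S ∪ (S_e * u): namely Γ' = {F ∪ G : F ∈ S', G ⊆ [d − 2|F|]}. -/
import Mathlib


open Polynomial Finset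

variable {V : Type*} [DecidableEq V]

/-- A (finite, abstract) simplicial complex: contains the empty face and is
closed under taking subsets. -/
def IsSimpComplex (K : Finset (Finset V)) : Prop :=
  ∅ ∈ K ∧ ∀ A ∈ K, ∀ B ⊆ A, B ∈ K

/-- The link of a face `F`: all faces `A` with `A ∪ F ∈ K` and `A ∩ F = ∅`. -/
def lk (K : Finset (Finset V)) (F : Finset V) : Finset (Finset V) :=
  K.filter fun A => A ∪ F ∈ K ∧ Disjoint A F

/-- The face polynomial `f_K(t) = ∑_{A ∈ K} t^{|A|}` (the empty face contributes 1). -/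
noncomputable def fpoly (K : Finset (Finset V)) : Polynomial ℤ :=
  ∑ A ∈ K, Polynomial.X ^ A.card

/-- `∑_{A ∈ K} (t-1)^{d-|A|} = ∑_i f_{i-1}(K) (t-1)^{d-i} = ∑_k h_k(K) t^{d-k}`,
the (descending form of the) h-polynomial of a `(d-1)`-dimensional complex. -/
noncomputable def hpoly (d : ℕ) (K : Finset (Finset V)) : Polynomial ℤ :=
  ∑ A ∈ K, (Polynomial.X - 1) ^ (d - A.card)

/-- `faceCount K i = f_{i-1}(K)`, the number of faces of cardinality `i`. -/
def faceCount (K : Finset (Finset V)) (i : ℕ) : ℕ :=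
  (K.filter fun A => A.card = i).card

/-- `Γ` (a `(d−1)`-dimensional complex on a vertex set containing `[d] = {1,…,d}`)
has a Boolean decomposition with initial part `S`: `S` is the subcomplex of faces of
`Γ` disjoint from `[d]`, and `Γ = {F ∪ G : F ∈ S, G ⊆ [d − 2|F|]}`. -/
def HasBooleanDecomp (d : ℕ) (Γ S : Finset (Finset ℕ)) : Prop :=
  S = Γ.filter (fun F => Disjoint F (Finset.Icc 1 d)) ∧
  ∀ A : Finset ℕ, A ∈ Γ ↔ ∃ F ∈ S, ∃ G ⊆ Finset.Icc 1 (d - 2 * F.card), A = F ∪ G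

/-- if `Γ` has a Boolean decomposition with initial part `S`, and the
subcomplex `Γ_e ≤ Γ` has a Boolean decomposition
`Γ_e = {F_e ∪ G_e : F_e ∈ S_e, G_e ⊆ [d − 2|F_e| − 2]}` with `S_e ≤ S`, then
`Γ' = Γ ∪ (Γ_e * u)` (new vertex `u`) has a Boolean decomposition with initial part
`S' = S ∪ (S_e * u)`. -/
theorem stmt7 (d : ℕ) (Γ S Γe Se : Finset (Finset ℕ)) (u : ℕ)
    (hΓ : HasBooleanDecomp d Γ S)
    (hSe : Se ⊆ S) (hΓe : Γe ⊆ Γ)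
    (hΓedec : ∀ A : Finset ℕ,
      A ∈ Γe ↔ ∃ F ∈ Se, ∃ G ⊆ Finset.Icc 1 (d - 2 * F.card - 2), A = F ∪ G)
    (hud : u ∉ Finset.Icc 1 d) (hu : ∀ A ∈ Γ, u ∉ A) :
    HasBooleanDecomp d (Γ ∪ Γe.image (insert u)) (S ∪ Se.image (insert u)) := by
  obtain ⟨hS, hΓdec⟩ := hΓ
  have hSsubΓ : S ⊆ Γ := by rw [hS]; exact filter_subset _ _
  have hSdisj : ∀ F ∈ S, Disjoint F (Finset.Icc 1 d) := by
    intro F hF; rw [hS] at hF; exact (mem_filter.mp hF).2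
  have hSeΓe : ∀ F ∈ Se, F ∈ Γe := by
    intro F hF
    exact (hΓedec F).mpr ⟨F, hF, ∅, empty_subset _, by simp⟩
  have hΓeS : ∀ B ∈ Γe, Disjoint B (Finset.Icc 1 d) → B ∈ Se := by
    intro B hB hdisj
    obtain ⟨F, hF, G, hG, rfl⟩ := (hΓedec B).mp hB
    have hGd : G ⊆ Finset.Icc 1 d := hG.trans (Finset.Icc_subset_Icc_right (by omega))
    have hGe : G = ∅ := by
      have h2 : Disjoint G (Finset.Icc 1 d) := (disjoint_union_left.mp hdisj).2
      exact disjoint_self.mp (h2.mono_right hGd)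
    simpa [hGe] using hF
  have huS : ∀ F ∈ S, u ∉ F := fun F hF => hu F (hSsubΓ hF)
  constructor
  · rw [filter_union, ← hS]
    congr 1
    ext A
    simp only [mem_filter, mem_image]
    constructor
    · rintro ⟨B, hB, rfl⟩
      refine ⟨⟨B, hSeΓe B hB, rfl⟩, ?_⟩
      rw [Finset.disjoint_insert_left]
      exact ⟨by simpa using hud, hSdisj B (hSe hB)⟩
    · rintro ⟨⟨B, hB, rfl⟩, hdisj⟩
      exact ⟨B, hΓeS B hB (hdisj.mono_left (subset_insert u B)), rfl⟩
  · intro A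
    simp only [mem_union, mem_image]
    constructor
    · rintro (hA | ⟨B, hB, rfl⟩)
      · obtain ⟨F, hF, G, hG, rfl⟩ := (hΓdec A).mp hA
        exact ⟨F, Or.inl hF, G, hG, rfl⟩
      · obtain ⟨F, hF, G, hG, rfl⟩ := (hΓedec B).mp hB
        refine ⟨insert u F, Or.inr ⟨F, hF, rfl⟩, G, ?_, (Finset.insert_union u F G).symm⟩
        rw [card_insert_of_notMem (huS F (hSe hF))]
        refine hG.trans (Finset.Icc_subset_Icc_right (by omega))
    · rintro ⟨F, hF | ⟨F', hF', rfl⟩, G, hG, rfl⟩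
      · exact Or.inl ((hΓdec _).mpr ⟨F, hF, G, hG, rfl⟩)
      · refine Or.inr ⟨F' ∪ G, ?_, (Finset.insert_union u F' G).symm ▸ rfl⟩
        refine (hΓedec _).mpr ⟨F', hF', G, ?_, rfl⟩
        rw [card_insert_of_notMem (huS F' (hSe hF'))] at hG
        exact hG.trans (Finset.Icc_subset_Icc_right (by omega))
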